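/- Let r, R be differentiable real functions of a satisfying the Riccati system r' = 2r²/R − (n+r)R and R' = R² + 4r − 2aR − 2rR/a (with R(a), a ≠ 0, and 2a−R ≠ 0). Then r = aR'/(2(2a−R)) + aR/2, and R satisfies the second-order ODE R'' = ((a−R)/((2a−R)R))(R')² + (R/(a(2a−R)))R' + (1/a)(2a−R)(a²−2n−1−aR)R. -/

import Mathlib

/-- From the Riccati system for `r` and `R`, one solves
`r = a R'/(2(2a - R)) + aR/2` and deduces a second-order ODE for `R`. -/
theorem Rn_second_order_ODE (n : ℝ) (I : Set ℝ) (hI : IsOpen I)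
    (r R : ℝ → ℝ)
    (hpos : ∀ a ∈ I, 0 < a)
    (hRne : ∀ a ∈ I, R a ≠ 0)
    (h2a : ∀ a ∈ I, 2 * a - R a ≠ 0)
    (hr : ∀ a ∈ I, HasDerivAt r (2 * (r a) ^ 2 / R a - (n + r a) * R a) a)
    (hR : ∀ a ∈ I, HasDerivAt R
      ((R a) ^ 2 + 4 * r a - 2 * a * R a - 2 * r a * R a / a) a)
    (a : ℝ) (haI : a ∈ I) :
    r a = a * deriv R a / (2 * (2 * a - R a)) + a * R a / 2
    ∧ deriv (deriv R) a
      = (a - R a) / ((2 * a - R a) * R a) * (deriv R a) ^ 2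
        + R a / (a * (2 * a - R a)) * deriv R a
        + 1 / a * (2 * a - R a) * (a ^ 2 - 2 * n - 1 - a * R a) * R a := by
  have ha : a ≠ 0 := (hpos a haI).ne'
  have hRa : R a ≠ 0 := hRne a haI
  have h2 : 2 * a - R a ≠ 0 := h2a a haI
  have hdR : deriv R a = (R a) ^ 2 + 4 * r a - 2 * a * R a - 2 * r a * R a / a :=
    (hR a haI).deriv
  constructor
  · rw [hdR]; field_simp
    rw [div_add' _ _ _ (by rwa [mul_comm] at h2), eq_div_iff (by rwa [mul_comm] at h2)]; ring
  · -- deriv R agrees with F near a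
    set F : ℝ → ℝ := fun x => (R x) ^ 2 + 4 * r x - 2 * x * R x - 2 * r x * R x / x with hF
    have hEq : deriv R =ᶠ[nhds a] F := by
      filter_upwards [hI.mem_nhds haI] with x hx
      exact (hR x hx).deriv
    have hkey : deriv (deriv R) a = deriv F a := by
      exact Filter.EventuallyEq.deriv_eq hEq
    have hRa' : HasDerivAt R ((R a) ^ 2 + 4 * r a - 2 * a * R a - 2 * r a * R a / a) a :=
      hR a haI
    have hra' : HasDerivAt r (2 * (r a) ^ 2 / R a - (n + r a) * R a) a := hr a haI
    set R' := (R a) ^ 2 + 4 * r a - 2 * a * R a - 2 * r a * R a / a with hR'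
    set r' := 2 * (r a) ^ 2 / R a - (n + r a) * R a with hr'
    have hFd : HasDerivAt F
        (2 * R a * R' + 4 * r' - (2 * R a + 2 * a * R')
          - ((2 * r' * R a + 2 * r a * R') * a - 2 * r a * R a * 1) / a ^ 2) a := by
      have h1 : HasDerivAt (fun x => (R x) ^ 2) (2 * R a * R') a := by
        have := hRa'.mul hRa'
        have h2R : R' * R a + R a * R' = 2 * R a * R' := by ring
        simpa [pow_two, h2R, Pi.mul_def] using this
      have h2' : HasDerivAt (fun x => 4 * r x) (4 * r') a := hra'.const_mul 4
      have h3 : HasDerivAt (fun x : ℝ => 2 * x * R x) (2 * R a + 2 * a * R') a := by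
        have := ((hasDerivAt_id a).const_mul 2).mul hRa'
        simpa [mul_comm, mul_assoc, Pi.mul_def] using this
      have h4 : HasDerivAt (fun x => 2 * r x * R x) (2 * r' * R a + 2 * r a * R') a := by
        have := (hra'.const_mul 2).mul hRa'
        simpa [Pi.mul_def] using this
      have h5 : HasDerivAt (fun x : ℝ => 2 * r x * R x / x)
          (((2 * r' * R a + 2 * r a * R') * a - 2 * r a * R a * 1) / a ^ 2) a :=
        h4.div (hasDerivAt_id a) ha
      exact ((h1.add h2').sub h3).sub h5
    rw [hkey, hFd.deriv, hdR]
    rw [hr', hR']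
    field_simp
    ring
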